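/- Every (k,ε)-quantum extractor with k ≤ n − 1 necessarily has seed size d ≥ log(1/ε): there exists a state γ_N with H_min(N)_γ = n − 1 such that for at least one unitary in the family (say U¹), ‖tr_{N\M}[U¹ γ_N (U¹)†] − 1_M/|M|‖_1 = 1, forcing (1/D)·1 ≤ ε, i.e., |D| ≥ 1/ε. -/

import Mathlib

open Matrix Finset
open scoped ComplexOrder

/-- Trace norm: the sum of the singular values of `A`. -/
noncomputable def traceNorm {n : Type} [Fintype n] [DecidableEq n] (A : Matrix n n ℂ) : ℝ :=
  ∑ i, Real.sqrt ((Matrix.posSemidef_conjTranspose_mul_self A).1.eigenvalues i)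

variable {n : Type} [Fintype n] [DecidableEq n]

lemma trace_unitary_conj (Q X : Matrix n n ℂ) (hQ : star Q * Q = 1) :
    (Q * X * star Q).trace = X.trace := by
  rw [Matrix.trace_mul_cycle, hQ, Matrix.one_mul]

lemma mul_diag_mul_sq (Q : Matrix n n ℂ) (hQ : star Q * Q = 1) (f : n → ℝ) :
    (Q * Matrix.diagonal (fun i => (f i : ℂ)) * star Q) ^ 2
      = Q * Matrix.diagonal (fun i => ((f i : ℝ) ^ 2 : ℂ)) * star Q := by
  rw [pow_two]
  calc (Q * diagonal (fun i => (f i : ℂ)) * star Q) * (Q * diagonal (fun i => (f i : ℂ)) * star Q)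
      = Q * diagonal (fun i => (f i : ℂ)) * (star Q * Q) * diagonal (fun i => (f i : ℂ)) * star Q := by
        simp only [Matrix.mul_assoc]
    _ = Q * (diagonal (fun i => (f i : ℂ)) * diagonal (fun i => (f i : ℂ))) * star Q := by
        rw [hQ, Matrix.mul_one]; simp only [Matrix.mul_assoc]
    _ = Q * diagonal (fun i => ((f i : ℝ) ^ 2 : ℂ)) * star Q := by
        rw [Matrix.diagonal_mul_diagonal]
        congr 2
        ext i
        push_cast
        ring

lemma sum_abs_diag_le_traceNorm (A : Matrix n n ℂ) (hA : A.IsHermitian) :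
    ∑ i, ‖A i i‖ ≤ traceNorm A := by
  classical
  set Q : Matrix n n ℂ := (hA.eigenvectorUnitary : Matrix n n ℂ) with hQdef
  have hQ1 : star Q * Q = 1 := Matrix.mem_unitaryGroup_iff'.mp hA.eigenvectorUnitary.2
  set lam := hA.eigenvalues with hlam
  have hspec : A = Q * Matrix.diagonal (fun i => ((lam i : ℝ) : ℂ)) * star Q := by
    simpa [Function.comp_def] using hA.spectral_theorem
  set H := Aᴴ * A with hH
  have hHpsd : H.PosSemidef := Matrix.posSemidef_conjTranspose_mul_self A
  set R := Q * Matrix.diagonal (fun i => ((|lam i| : ℝ) : ℂ)) * star Q with hR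
  have hRpsd : R.PosSemidef := by
    rw [hR, Matrix.star_eq_conjTranspose]
    exact (Matrix.posSemidef_diagonal_iff.mpr (fun i => by
      rw [Complex.le_def]; simp [abs_nonneg])).mul_mul_conjTranspose_same Q
  have hRsq : R ^ 2 = H := by
    rw [hR, mul_diag_mul_sq Q hQ1, hH, hA.eq]
    conv_rhs => rw [hspec, ← pow_two, mul_diag_mul_sq Q hQ1]
    have hfun : (fun i => ((|lam i| : ℝ) : ℂ) ^ 2) = (fun i => ((lam i : ℝ) : ℂ) ^ 2) := by
      funext i; exact_mod_cast congrArg Complex.ofReal (sq_abs (lam i))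
    rw [show (fun i => ((|lam i| : ℝ) ^ 2 : ℂ)) = (fun i => ((lam i : ℝ) ^ 2 : ℂ)) from hfun]
  -- trace computations
  have htrR : R.trace = ∑ i, ((|lam i| : ℝ) : ℂ) := by
    rw [hR, trace_unitary_conj _ _ hQ1, Matrix.trace_diagonal]
  have hEig : ∑ i, |lam i| = ∑ i, Real.sqrt (hHpsd.1.eigenvalues i) := by
    have hHform : H = Q * Matrix.diagonal (fun i => (((|lam i| : ℝ) : ℂ) ^ 2)) * star Q := by
      rw [← hRsq, hR, mul_diag_mul_sq Q hQ1]
    have hcp : H.charpoly = ∏ i, (Polynomial.X - Polynomial.C (((|lam i| : ℝ) : ℂ) ^ 2)) := by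
      rw [hHform, Matrix.charpoly_mul_comm, ← Matrix.mul_assoc, hQ1, Matrix.one_mul,
        Matrix.charpoly_diagonal]
    have hroots := hHpsd.1.roots_charpoly_eq_eigenvalues
    rw [hcp, Polynomial.roots_prod _ _
      (Finset.prod_ne_zero_iff.mpr fun i _ => Polynomial.X_sub_C_ne_zero _)] at hroots
    have hmul := congrArg (Multiset.map Complex.re) hroots
    simp only [Polynomial.roots_X_sub_C, Multiset.map_map, Function.comp_def,
      Multiset.bind_singleton] at hmul
    have hmul' : Multiset.map (fun i => hHpsd.1.eigenvalues i) Finset.univ.val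
        = Multiset.map (fun i => |lam i| ^ 2) Finset.univ.val := by
      have e1 : ∀ x, (((|lam x| : ℝ) : ℂ) ^ 2).re = |lam x| ^ 2 := fun x => by
        rw [← Complex.ofReal_pow, Complex.ofReal_re]
      simp only [e1, Complex.ofReal_re] at hmul
      exact hmul.symm
    calc ∑ i, |lam i| = (Multiset.map Real.sqrt
          (Multiset.map (fun i => |lam i| ^ 2) Finset.univ.val)).sum := by
          rw [Multiset.map_map, ← Finset.sum_eq_multiset_sum]
          refine Finset.sum_congr rfl fun i _ => ?_
          simp only [Function.comp_apply, Real.sqrt_sq_eq_abs, abs_abs]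
      _ = ∑ i, Real.sqrt (hHpsd.1.eigenvalues i) := by
          rw [← hmul', Multiset.map_map, ← Finset.sum_eq_multiset_sum]
          rfl
  have hTN : traceNorm A = ∑ i, |lam i| := by
    rw [traceNorm, hEig]
  rw [hTN]
  -- now bound the diagonal
  have hcol : ∀ j, ∑ i, ‖Q i j‖ ^ 2 = 1 := by
    intro j
    have := congrFun (congrFun hQ1 j) j
    simp only [Matrix.mul_apply, Matrix.one_apply_eq, Matrix.star_apply] at this
    have h2 : ((∑ i, ‖Q i j‖ ^ 2 : ℝ) : ℂ) = ((1 : ℝ) : ℂ) := by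
      push_cast
      rw [← this]
      refine Finset.sum_congr rfl fun i _ => ?_
      have hsq : star (Q i j) * Q i j = ((‖Q i j‖ : ℝ) : ℂ) ^ 2 := by
        rw [show star (Q i j) = (starRingEnd ℂ) (Q i j) from rfl,
          ← Complex.normSq_eq_conj_mul_self, Complex.normSq_eq_norm_sq]
        push_cast; ring
      rw [hsq]
    exact_mod_cast h2
  have hdiag : ∀ i, ‖A i i‖ ≤ ∑ j, |lam j| * ‖Q i j‖ ^ 2 := by
    intro i
    have hAij : A i i = ∑ j, Q i j * ((lam j : ℝ) : ℂ) * (starRingEnd ℂ) (Q i j) := by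
      conv_lhs => rw [hspec]
      rw [Matrix.mul_apply]
      refine Finset.sum_congr rfl fun j _ => ?_
      rw [Matrix.mul_diagonal, Matrix.star_apply]
      rfl
    rw [hAij]
    calc ‖∑ j, Q i j * ((lam j : ℝ) : ℂ) * (starRingEnd ℂ) (Q i j)‖
        ≤ ∑ j, ‖Q i j * ((lam j : ℝ) : ℂ) * (starRingEnd ℂ) (Q i j)‖ := by
          exact norm_sum_le _ _
      _ = ∑ j, |lam j| * ‖Q i j‖ ^ 2 := by
          refine Finset.sum_congr rfl fun j _ => ?_
          simp [norm_mul, Complex.norm_conj, Complex.norm_real]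
          ring
  calc ∑ i, ‖A i i‖ ≤ ∑ i, ∑ j, |lam j| * ‖Q i j‖ ^ 2 :=
        Finset.sum_le_sum fun i _ => hdiag i
    _ = ∑ j, |lam j| * ∑ i, ‖Q i j‖ ^ 2 := by
        rw [Finset.sum_comm]
        simp [Finset.mul_sum]
    _ = ∑ j, |lam j| := by simp [hcol]

/-- every (k,ε)-quantum extractor with `k ≤ n − 1` has seed size
`d ≥ log(1/ε)`, i.e. `|D| ≥ 1/ε`.  Here `H_N = H_M ⊗ H_{N\M}` (spaces of qubit strings,
so `|M|` is even), `H_min(N)_ρ ≥ k` means `λ_max(ρ) ≤ 2^{−k}`, and the extractor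
property is that the output is `ε`-close to `1_M/|M| ⊗ 1_D/|D|` in trace norm. -/
theorem quantum_extractor_seed_lower_bound
    {M J D : Type} [Fintype M] [DecidableEq M] [Fintype J] [DecidableEq J]
    [Fintype D] [DecidableEq D] [Nonempty M] [Nonempty J] [Nonempty D]
    (hMeven : Even (Fintype.card M))
    (U : D → Matrix (M × J) (M × J) ℂ) (hU : ∀ i, U i ∈ Matrix.unitaryGroup (M × J) ℂ)
    (k ε : ℝ) (hε : 0 < ε)
    (hk : k ≤ Real.logb 2 (Fintype.card (M × J)) - 1)
    -- the (k,ε)-quantum extractor property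
    (hext : ∀ ρ : Matrix (M × J) (M × J) ℂ, ρ.PosSemidef → ρ.trace = 1 →
      (((((2 : ℝ) ^ (-k) : ℝ) : ℂ) • (1 : Matrix (M × J) (M × J) ℂ) - ρ).PosSemidef) →
      traceNorm
        ((Matrix.of fun (mi : M × D) (mi' : M × D) =>
            if mi.2 = mi'.2 then
              ((Fintype.card D : ℂ))⁻¹ *
                ∑ t : J, (U mi.2 * ρ * (U mi.2)ᴴ) (mi.1, t) (mi'.1, t)
            else 0)
          - ((Fintype.card M * Fintype.card D : ℂ))⁻¹ • (1 : Matrix (M × D) (M × D) ℂ))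
        ≤ ε) :
    Real.logb 2 (Fintype.card D) ≥ Real.logb 2 (1 / ε) := by
  classical
  have hM0 : 0 < Fintype.card M := Fintype.card_pos
  have hJ0 : 0 < Fintype.card J := Fintype.card_pos
  have hD0 : 0 < Fintype.card D := Fintype.card_pos
  have hMr : (0:ℝ) < (Fintype.card M : ℝ) := by exact_mod_cast hM0
  have hJr : (0:ℝ) < (Fintype.card J : ℝ) := by exact_mod_cast hJ0
  have hDr : (0:ℝ) < (Fintype.card D : ℝ) := by exact_mod_cast hD0
  have hMc : ((Fintype.card M : ℂ)) ≠ 0 := by exact_mod_cast hM0.ne'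
  have hJc : ((Fintype.card J : ℂ)) ≠ 0 := by exact_mod_cast hJ0.ne'
  have hDc : ((Fintype.card D : ℂ)) ≠ 0 := by exact_mod_cast hD0.ne'
  obtain ⟨S, -, hS⟩ := Finset.exists_subset_card_eq
    (s := (Finset.univ : Finset M)) (n := Fintype.card M / 2)
    (by rw [Finset.card_univ]; exact Nat.div_le_self _ _)
  set d₀ : D := Classical.arbitrary D with hd₀
  set cR : ℝ := 2 / ((Fintype.card M : ℝ) * (Fintype.card J : ℝ)) with hcR
  have hcR0 : 0 < cR := by rw [hcR]; positivity
  set g : M × J → ℂ := fun p => if p.1 ∈ S then (cR : ℂ) else 0 with hg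
  set V := U d₀ with hV
  have hV1 : Vᴴ * V = 1 := by
    have := Matrix.mem_unitaryGroup_iff'.mp (hU d₀)
    rwa [Matrix.star_eq_conjTranspose] at this
  have hV2 : V * Vᴴ = 1 := by
    have := Matrix.mem_unitaryGroup_iff.mp (hU d₀)
    rwa [Matrix.star_eq_conjTranspose] at this
  set ρ : Matrix (M × J) (M × J) ℂ := Vᴴ * Matrix.diagonal g * V with hρdef
  have hgpos : ∀ p, 0 ≤ g p := by
    intro p
    rw [hg]
    by_cases h : p.1 ∈ S <;> simp only [h, if_true, if_false, le_refl]
    · rw [Complex.le_def]; simp [hcR0.le]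
  have hdPSD : (Matrix.diagonal g).PosSemidef := Matrix.posSemidef_diagonal_iff.mpr hgpos
  have hρPSD : ρ.PosSemidef := by
    have := hdPSD.mul_mul_conjTranspose_same Vᴴ
    rwa [Matrix.conjTranspose_conjTranspose] at this
  have hcard2 : (S.card : ℝ) * 2 = (Fintype.card M : ℝ) := by
    rw [hS]
    exact_mod_cast Nat.div_mul_cancel hMeven.two_dvd
  have hsumg : ∑ p : M × J, g p = (S.card : ℂ) * (Fintype.card J : ℂ) * (cR : ℂ) := by
    rw [Fintype.sum_prod_type]
    have h1 : ∀ m : M, ∑ _t : J, g (m, _t)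
        = if m ∈ S then (Fintype.card J : ℂ) * (cR : ℂ) else 0 := by
      intro m
      by_cases h : m ∈ S <;>
        simp [hg, h, Finset.sum_const, nsmul_eq_mul]
    rw [Finset.sum_congr rfl fun m _ => h1 m, Finset.sum_ite_mem, Finset.univ_inter,
      Finset.sum_const, nsmul_eq_mul]
    ring
  have htrρ : ρ.trace = 1 := by
    rw [hρdef, Matrix.trace_mul_comm, ← Matrix.mul_assoc, hV2, Matrix.one_mul,
      Matrix.trace_diagonal, hsumg]
    have hreal : (S.card : ℝ) * (Fintype.card J : ℝ) * cR = 1 := by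
      rw [hcR]
      field_simp
      linear_combination hcard2
    calc (S.card : ℂ) * (Fintype.card J : ℂ) * (cR : ℂ)
        = (((S.card : ℝ) * (Fintype.card J : ℝ) * cR : ℝ) : ℂ) := by push_cast; ring
      _ = 1 := by rw [hreal, Complex.ofReal_one]
  -- min entropy condition
  set a : ℝ := (2:ℝ) ^ (-k) with ha
  have hacR : cR ≤ a := by
    have hN : (Fintype.card (M × J) : ℝ) = (Fintype.card M : ℝ) * Fintype.card J := by
      rw [Fintype.card_prod]; push_cast; ring
    have hNpos : (0:ℝ) < (Fintype.card M : ℝ) * Fintype.card J := by positivity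
    have h1 : (1 : ℝ) - Real.logb 2 ((Fintype.card M : ℝ) * Fintype.card J) ≤ -k := by
      rw [← hN]; linarith [hk]
    have h2 : (2:ℝ) ^ ((1:ℝ) - Real.logb 2 ((Fintype.card M:ℝ) * Fintype.card J)) ≤ a :=
      (Real.rpow_le_rpow_left_iff (by norm_num : (1:ℝ) < 2)).mpr h1
    have h3 : (2:ℝ) ^ ((1:ℝ) - Real.logb 2 ((Fintype.card M:ℝ) * Fintype.card J)) = cR := by
      rw [Real.rpow_sub (by norm_num : (0:ℝ) < 2), Real.rpow_one,
        Real.rpow_logb (by norm_num) (by norm_num) hNpos, hcR]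
    linarith [h2, h3]
  have hsub : (((a : ℝ) : ℂ) • (1 : Matrix (M × J) (M × J) ℂ) - ρ).PosSemidef := by
    have hform : ((a : ℂ) • (1 : Matrix (M × J) (M × J) ℂ) - ρ)
        = Vᴴ * Matrix.diagonal (fun p => (a : ℂ) - g p) * V := by
      have hdiag : Matrix.diagonal (fun p : M × J => (a:ℂ) - g p)
          = (a:ℂ) • (1 : Matrix (M × J) (M × J) ℂ) - Matrix.diagonal g := by
        ext p q
        by_cases h : p = q <;>
          simp [Matrix.diagonal_apply, h, Matrix.one_apply, Matrix.sub_apply]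
      rw [hdiag, Matrix.mul_sub, Matrix.sub_mul, hρdef]
      congr 1
      rw [mul_smul_comm, Matrix.mul_one, smul_mul_assoc, hV1]
    rw [hform]
    have hmidPSD : (Matrix.diagonal (fun p : M × J => (a:ℂ) - g p)).PosSemidef := by
      refine Matrix.posSemidef_diagonal_iff.mpr fun p => ?_
      rw [hg]
      by_cases h : p.1 ∈ S <;> simp only [h, if_true, if_false, sub_zero]
      · have : (a:ℂ) - (cR:ℂ) = ((a - cR : ℝ) : ℂ) := by push_cast; ring
        rw [this, Complex.le_def]
        simp [sub_nonneg.mpr hacR]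
      · rw [show (a:ℂ) = ((a:ℝ):ℂ) from rfl, Complex.le_def]
        simp
        positivity
    have := hmidPSD.mul_mul_conjTranspose_same Vᴴ
    rwa [Matrix.conjTranspose_conjTranspose] at this
  have hconj : V * ρ * Vᴴ = Matrix.diagonal g := by
    rw [hρdef, ← Matrix.mul_assoc, ← Matrix.mul_assoc, hV2, Matrix.one_mul,
      Matrix.mul_assoc, hV2, Matrix.mul_one]
    -- the output matrix
  set Aout : Matrix (M × D) (M × D) ℂ := Matrix.of fun mi mi' =>
    if mi.2 = mi'.2 then
      ((Fintype.card D : ℂ))⁻¹ * ∑ t : J, (U mi.2 * ρ * (U mi.2)ᴴ) (mi.1, t) (mi'.1, t)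
    else 0 with hAout
  set Afin : Matrix (M × D) (M × D) ℂ :=
    Aout - ((Fintype.card M * Fintype.card D : ℂ))⁻¹ • 1 with hAfin
  have hmain : traceNorm Afin ≤ ε := hext ρ hρPSD htrρ hsub
  -- Hermitian
  have hXH : ∀ d : D, ((U d * ρ * (U d)ᴴ)ᴴ) = U d * ρ * (U d)ᴴ := by
    intro d
    calc (U d * ρ * (U d)ᴴ)ᴴ = ((U d)ᴴ)ᴴ * (ρᴴ * (U d)ᴴ) := by
          rw [Matrix.conjTranspose_mul, Matrix.conjTranspose_mul]
      _ = U d * ρ * (U d)ᴴ := by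
          rw [Matrix.conjTranspose_conjTranspose, hρPSD.1.eq]
          simp only [hρdef, Matrix.mul_assoc]
  have hAoutH : Aout.IsHermitian := by
    show Aoutᴴ = Aout
    ext mi mi'
    rw [Matrix.conjTranspose_apply, hAout]
    simp only [Matrix.of_apply]
    by_cases h : mi.2 = mi'.2
    · rw [if_pos h.symm, if_pos h, ← h]
      have hterm : ∀ t : J, star ((U mi.2 * ρ * (U mi.2)ᴴ) (mi'.1, t) (mi.1, t))
          = (U mi.2 * ρ * (U mi.2)ᴴ) (mi.1, t) (mi'.1, t) := by
        intro t
        rw [← Matrix.conjTranspose_apply, hXH]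
      simp only [star_mul', star_inv₀, star_natCast, star_sum, hterm]
      try ring
    · rw [if_neg (fun hh => h hh.symm), if_neg h]
      exact star_zero _
  have hsmulH :
      (((Fintype.card M * Fintype.card D : ℂ))⁻¹ • (1 : Matrix (M × D) (M × D) ℂ)).IsHermitian := by
    show _ᴴ = _
    rw [Matrix.conjTranspose_smul, Matrix.conjTranspose_one]
    congr 1
    simp
  have hAfinH : Afin.IsHermitian := hAoutH.sub hsmulH
  -- diagonal entries at seed d₀
  have hentry : ∀ m : M, Afin (m, d₀) (m, d₀)
      = ((Fintype.card D : ℂ))⁻¹ * (if m ∈ S then ((Fintype.card J : ℂ) * (cR : ℂ)) else 0)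
        - ((Fintype.card M : ℂ) * (Fintype.card D : ℂ))⁻¹ := by
    intro m
    rw [hAfin, Matrix.sub_apply, Matrix.smul_apply, Matrix.one_apply_eq, smul_eq_mul, mul_one,
      hAout]
    simp only [Matrix.of_apply, if_true]
    congr 1
    rw [← hV, hconj]
    have hdd : ∀ t : J, Matrix.diagonal g ((m, t)) ((m, t)) = g (m, t) := fun t =>
      Matrix.diagonal_apply_eq g _
    rw [Finset.sum_congr rfl fun t _ => hdd t]
    by_cases hm : m ∈ S <;> simp [hg, hm, Finset.sum_const, nsmul_eq_mul]
  set x : ℝ := ((Fintype.card M : ℝ) * (Fintype.card D : ℝ))⁻¹ with hx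
  have habs : ∀ m : M, ‖Afin (m, d₀) (m, d₀)‖ = x := by
    intro m
    rw [hentry m]
    by_cases hm : m ∈ S
    · have hval : ((Fintype.card D : ℂ))⁻¹ *
            (if m ∈ S then ((Fintype.card J : ℂ) * (cR : ℂ)) else 0)
          - ((Fintype.card M : ℂ) * (Fintype.card D : ℂ))⁻¹ = ((x : ℝ) : ℂ) := by
        rw [if_pos hm, hcR, hx]
        push_cast
        field_simp
        ring
      rw [hval, Complex.norm_real, Real.norm_of_nonneg (by positivity)]
    · have hval : ((Fintype.card D : ℂ))⁻¹ *
            (if m ∈ S then ((Fintype.card J : ℂ) * (cR : ℂ)) else 0)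
          - ((Fintype.card M : ℂ) * (Fintype.card D : ℂ))⁻¹ = -((x : ℝ) : ℂ) := by
        rw [if_neg hm, hx]
        push_cast
        field_simp
        ring
      rw [hval, norm_neg, Complex.norm_real, Real.norm_of_nonneg (by positivity)]
  -- sum the diagonal
  have hsumlb : (Fintype.card D : ℝ)⁻¹ ≤ ∑ i : M × D, ‖Afin i i‖ := by
    rw [Fintype.sum_prod_type]
    have h2 : ∀ m : M, ‖Afin (m, d₀) (m, d₀)‖
        ≤ ∑ d : D, ‖Afin (m, d) (m, d)‖ := fun m =>
      Finset.single_le_sum (f := fun d => ‖Afin (m, d) (m, d)‖)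
        (fun d _ => norm_nonneg _) (Finset.mem_univ d₀)
    calc (Fintype.card D : ℝ)⁻¹ = ∑ _m : M, x := by
          rw [Finset.sum_const, Finset.card_univ, nsmul_eq_mul, hx]
          field_simp
      _ = ∑ m : M, ‖Afin (m, d₀) (m, d₀)‖ :=
          Finset.sum_congr rfl fun m _ => (habs m).symm
      _ ≤ _ := Finset.sum_le_sum fun m _ => h2 m
  have hTNlb := sum_abs_diag_le_traceNorm Afin hAfinH
  have hεD : (Fintype.card D : ℝ)⁻¹ ≤ ε := le_trans hsumlb (le_trans hTNlb hmain)
  have hD1 : 1 / ε ≤ (Fintype.card D : ℝ) := by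
    rw [div_le_iff₀ hε]
    calc (1 : ℝ) = (Fintype.card D : ℝ) * (Fintype.card D : ℝ)⁻¹ := by field_simp
      _ ≤ (Fintype.card D : ℝ) * ε := mul_le_mul_of_nonneg_left hεD hDr.le
  exact Real.logb_le_logb_of_le (by norm_num) (by positivity) hD1
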